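/- arXiv:2304.12759 — 5 statements merged into one kernel-verified Lean document; each statement's English description precedes it below -/
import Mathlib

section
/- Let f : [c,d] → ℝ be a C¹ function and g(x) = min{f(y) : x ≤ y ≤ d}. If g is differentiable at x ∈ (c,d) with g'(x) > 0, then g'(x) = f'(x). -/
theorem stmt_2 (c d : ℝ) (f : ℝ → ℝ)
    (hf : ContDiffOn ℝ 1 f (Set.Icc c d))
    (g : ℝ → ℝ) (hg : ∀ x, g x = sInf (f '' Set.Icc x d))
    (x : ℝ) (hx : x ∈ Set.Ioo c d) (m : ℝ)
    (hder : HasDerivAt g m x) (hm : 0 < m) :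
    m = derivWithin f (Set.Icc c d) x := by
  obtain ⟨hcx, hxd⟩ := hx
  have hcont : ContinuousOn f (Set.Icc c d) := hf.continuousOn
  have hxmem : x ∈ Set.Icc c d := ⟨hcx.le, hxd.le⟩
  have hnhds : Set.Icc c d ∈ nhds x := Icc_mem_nhds hcx hxd
  -- min attained at some y0 ∈ [x,d]
  obtain ⟨y0, hy0mem, hy0min⟩ :=
    isCompact_Icc.exists_isMinOn (Set.nonempty_Icc.2 hxd.le)
      (hcont.mono (Set.Icc_subset_Icc_left hcx.le))
  -- y0 = x; otherwise g constant on [x,y0]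
  have hy0x : y0 = x := by
    by_contra hne
    have hlt : x < y0 := lt_of_le_of_ne hy0mem.1 (Ne.symm hne)
    have hconst : ∀ t ∈ Set.Icc x y0, g t = f y0 := by
      intro t ht
      rw [hg t]
      apply IsLeast.csInf_eq
      constructor
      · exact Set.mem_image_of_mem f ⟨ht.2, hy0mem.2⟩
      · rintro z ⟨w, hw, rfl⟩
        exact hy0min ⟨ht.1.trans hw.1, hw.2⟩
    have h0 : HasDerivWithinAt g 0 (Set.Icc x y0) x := by
      have := (hasDerivWithinAt_const x (Set.Icc x y0) (f y0))
      exact this.congr hconst (hconst x ⟨le_rfl, hlt.le⟩)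
    have hm' : HasDerivWithinAt g m (Set.Icc x y0) x := hder.hasDerivWithinAt
    have := (uniqueDiffOn_Icc hlt x ⟨le_rfl, hlt.le⟩).eq_deriv _ hm' h0
    exact hm.ne' this
  have hgx : g x = f x := by
    rw [hg x]
    apply IsLeast.csInf_eq
    subst hy0x
    exact ⟨Set.mem_image_of_mem f hy0mem, by rintro z ⟨w, hw, rfl⟩; exact hy0min hw⟩
  -- g ≤ f on [c,d]
  have hgle : ∀ t ∈ Set.Icc c d, g t ≤ f t := by
    intro t ht
    rw [hg t]
    have hsub : Set.Icc t d ⊆ Set.Icc c d := Set.Icc_subset_Icc_left ht.1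
    have hbdd : BddBelow (f '' Set.Icc t d) :=
      (isCompact_Icc.image_of_continuousOn (hcont.mono hsub)).bddBelow
    exact csInf_le hbdd (Set.mem_image_of_mem f ⟨le_rfl, ht.2⟩)
  -- f differentiable at x
  have hfd : DifferentiableAt ℝ f x :=
    ((hf.differentiableOn one_ne_zero) x hxmem).differentiableAt hnhds
  -- h := f - g has local min at x
  have hmin : IsLocalMin (fun t => f t - g t) x := by
    filter_upwards [hnhds] with t ht
    have := hgle t ht
    simp [hgx]
    linarith
  have hder2 : HasDerivAt (fun t => f t - g t) (deriv f x - m) x :=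
    hfd.hasDerivAt.sub hder
  have h0 := hmin.hasDerivAt_eq_zero hder2
  have : deriv f x = m := by linarith
  rw [derivWithin_of_mem_nhds hnhds, this]
end

section
/- Let p : 𝔻 → ℂ be holomorphic with Re p ≥ 0, satisfying |p(z)| ≤ M/(1-|z|²) for all z ∈ 𝔻, and set G(z) = (z-1)² p(z). Then for every λ ∈ (0,1) and every z in the disc D(λ, 1-λ), one has |G(z)| ≤ M/λ. -/
theorem stmt_4 (p : ℂ → ℂ) (M : ℝ) (hM : 0 < M)
    (hp : DifferentiableOn ℂ p (Metric.ball (0 : ℂ) 1))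
    (hre : ∀ z ∈ Metric.ball (0 : ℂ) 1, 0 ≤ (p z).re)
    (hbound : ∀ z ∈ Metric.ball (0 : ℂ) 1,
      ‖p z‖ ≤ M / (1 - ‖z‖ ^ 2))
    (G : ℂ → ℂ) (hG : ∀ z, G z = (z - 1) ^ 2 * p z) :
    ∀ lam : ℝ, lam ∈ Set.Ioo (0 : ℝ) 1 →
      ∀ z ∈ Metric.ball (lam : ℂ) (1 - lam), ‖G z‖ ≤ M / lam := by
  intro lam hlam z hz
  obtain ⟨hl0, hl1⟩ := hlam
  rw [Metric.mem_ball, Complex.dist_eq] at hz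
  have h4 : ‖z - lam‖ ^ 2 < (1 - lam) ^ 2 := by
    nlinarith [norm_nonneg (z - (lam : ℂ))]
  have h3 : (z.re - lam) ^ 2 + z.im ^ 2 < (1 - lam) ^ 2 := by
    rw [Complex.sq_norm] at h4
    simpa [Complex.normSq_apply, sq] using h4
  have h2 : ‖z‖ ^ 2 = z.re ^ 2 + z.im ^ 2 := by
    rw [Complex.sq_norm]; simp [Complex.normSq_apply, sq]
  have h1 : ‖z - 1‖ ^ 2 = (z.re - 1) ^ 2 + z.im ^ 2 := by
    rw [Complex.sq_norm]; simp [Complex.normSq_apply, sq]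
  have htri : ‖z‖ ≤ ‖z - lam‖ + ‖(lam : ℂ)‖ := by
    simpa using norm_add_le (z - lam) (lam : ℂ)
  have hal : ‖(lam : ℂ)‖ = lam := by
    rw [Complex.norm_real, Real.norm_eq_abs, abs_of_pos hl0]
  have hz' : z ∈ Metric.ball (0 : ℂ) 1 := by
    rw [Metric.mem_ball, Complex.dist_eq, sub_zero]
    linarith
  have ha : ‖z‖ < 1 := by
    simpa [Complex.dist_eq] using hz'
  have hden : 0 < 1 - ‖z‖ ^ 2 := by nlinarith [norm_nonneg z]
  have hb := hbound z hz'
  have key : lam * ‖z - 1‖ ^ 2 ≤ 1 - ‖z‖ ^ 2 := by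
    nlinarith
  rw [hG, norm_mul, norm_pow]
  calc ‖z - 1‖ ^ 2 * ‖p z‖
      ≤ ‖z - 1‖ ^ 2 * (M / (1 - ‖z‖ ^ 2)) :=
        mul_le_mul_of_nonneg_left hb (by positivity)
    _ = ‖z - 1‖ ^ 2 * M / (1 - ‖z‖ ^ 2) := by ring
    _ ≤ M / lam := by
        rw [div_le_div_iff₀ hden hl0]
        nlinarith [norm_nonneg (z - 1)]
end

section
/- For t ≥ 0 and z in the right half-plane ℂ₊, define Φ_t(z) = (t/2 + z^{1/2})², where z^{1/2} is the principal square root. Then Φ_t maps ℂ₊ into ℂ₊, Φ₀ is the identity, and Φ_t ∘ Φ_s = Φ_{t+s} for all s, t ≥ 0. -/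
open Complex Real

lemma sqrt_im_lt_re {z : ℂ} (hz : 0 < z.re) :
    |(z ^ ((1:ℂ)/2)).im| < (z ^ ((1:ℂ)/2)).re := by
  have h1 : ((1:ℂ)/2) = (2⁻¹ : ℂ) := by norm_num
  rw [h1, Complex.abs_cpow_inv_two_im, Complex.cpow_inv_two_re]
  have habs : z.re ≤ ‖z‖ := Complex.re_le_norm z
  apply Real.sqrt_lt_sqrt
  · linarith
  · linarith

theorem stmt_8 (Φ : ℝ → ℂ → ℂ)
    (hΦ : ∀ t : ℝ, ∀ z : ℂ, Φ t z = ((t : ℂ) / 2 + z ^ ((1 : ℂ) / 2)) ^ 2) :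
    (∀ t : ℝ, 0 ≤ t → ∀ z : ℂ, 0 < z.re → 0 < (Φ t z).re) ∧
    (∀ z : ℂ, 0 < z.re → Φ 0 z = z) ∧
    (∀ s t : ℝ, 0 ≤ s → 0 ≤ t → ∀ z : ℂ, 0 < z.re →
      Φ t (Φ s z) = Φ (t + s) z) := by
  -- key: Re of Φ and arg bound
  have hre : ∀ t : ℝ, 0 ≤ t → ∀ z : ℂ, 0 < z.re →
      |(((t : ℂ) / 2 + z ^ ((1 : ℂ) / 2))).im| < (((t : ℂ) / 2 + z ^ ((1 : ℂ) / 2))).re := by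
    intro t ht z hz
    have := sqrt_im_lt_re hz
    simp only [Complex.add_im, Complex.add_re, Complex.div_ofNat_im, Complex.div_ofNat_re,
      Complex.ofReal_im, Complex.ofReal_re]
    calc |0/2 + (z ^ ((1:ℂ)/2)).im| = |(z ^ ((1:ℂ)/2)).im| := by norm_num
    _ < (z ^ ((1:ℂ)/2)).re := this
    _ ≤ t/2 + (z ^ ((1:ℂ)/2)).re := by linarith
  have hrepos : ∀ t : ℝ, 0 ≤ t → ∀ z : ℂ, 0 < z.re → 0 < (Φ t z).re := by
    intro t ht z hz
    rw [hΦ]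
    set w := (t : ℂ) / 2 + z ^ ((1:ℂ)/2)
    have h := hre t ht z hz
    have h2 : |w.im| * |w.im| < w.re * w.re := by
      have h0 : (0:ℝ) ≤ |w.im| := abs_nonneg _
      nlinarith
    have : (w^2).re = w.re * w.re - w.im * w.im := by
      simp [pow_two, Complex.mul_re]
    rw [this]
    nlinarith [abs_mul_abs_self w.im]
  refine ⟨hrepos, ?_, ?_⟩
  · intro z hz
    rw [hΦ]
    have hz0 : z ≠ 0 := by
      intro h; rw [h] at hz; simp at hz
    have : ((0:ℝ) : ℂ) / 2 + z ^ ((1:ℂ)/2) = z ^ ((2:ℕ)⁻¹ : ℂ) := by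
      norm_num
    rw [this, Complex.cpow_nat_inv_pow z two_ne_zero]
  · intro s t hs ht z hz
    rw [hΦ, hΦ, hΦ]
    set w := (s : ℂ) / 2 + z ^ ((1:ℂ)/2) with hw
    have hwre : 0 < w.re := lt_of_le_of_lt (abs_nonneg _) (hre s hs z hz)
    have harg : |w.arg| < π / 2 := by
      rw [Complex.abs_arg_lt_pi_div_two_iff]; left; exact hwre
    have h1 : -(π / (2:ℕ)) < w.arg := by
      push_cast; cases abs_lt.mp harg; linarith
    have h2 : w.arg ≤ π / (2:ℕ) := by
      push_cast; cases abs_lt.mp harg with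
      | intro a b => linarith
    have hsqrt : (w ^ 2) ^ ((1:ℂ)/2) = w := by
      have : ((1:ℂ)/2) = (((2:ℕ):ℂ))⁻¹ := by norm_num
      rw [this, Complex.pow_cpow_nat_inv two_ne_zero h1 h2]
    rw [hsqrt]
    push_cast
    ring
end

section
/- Let H : ℂ₊ → ℂ be the infinitesimal generator of a continuous semigroup {Φ_t} on the right half-plane with Re H ≥ 0, and suppose H is bounded on ℂ_ε for every ε > 0. Then Re(Φ_t(z)) → Re(z) as t → 0⁺ uniformly in z ∈ ℂ₊; quantitatively: for every ε > 0, if M = sup_{Re z > ε/2} |H(z)| and t ≤ ε/(2M), then 0 ≤ Re(Φ_t(z)) − Re(z) < ε for all z ∈ ℂ₊. -/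
open Set

theorem stmt_12 (H : ℂ → ℂ)
    (hH : DifferentiableOn ℂ H {w : ℂ | 0 < w.re})
    (hre : ∀ z : ℂ, 0 < z.re → 0 ≤ (H z).re)
    (Φ : ℝ → ℂ → ℂ)
    (hmaps : ∀ t : ℝ, 0 ≤ t → ∀ z : ℂ, 0 < z.re → 0 < (Φ t z).re)
    (h0 : ∀ z : ℂ, 0 < z.re → Φ 0 z = z)
    (hderiv : ∀ z : ℂ, 0 < z.re → ∀ t : ℝ, 0 ≤ t →
      HasDerivAt (fun s : ℝ => Φ s z) (H (Φ t z)) t)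
    (hbounded : ∀ ε > (0 : ℝ), ∃ M : ℝ, ∀ z : ℂ, ε < z.re → ‖H z‖ ≤ M) :
    ∀ ε > (0 : ℝ), ∀ M > (0 : ℝ),
      (∀ z : ℂ, ε / 2 < z.re → ‖H z‖ ≤ M) →
      ∀ t : ℝ, 0 ≤ t → t ≤ ε / (2 * M) → ∀ z : ℂ, 0 < z.re →
        0 ≤ (Φ t z).re - z.re ∧ (Φ t z).re - z.re < ε := by
  intro ε hε M hM hbound t ht htM z hz
  set f : ℝ → ℝ := fun s => (Φ s z).re with hfdef
  have hfd : ∀ s : ℝ, 0 ≤ s → HasDerivAt f ((H (Φ s z)).re) s := by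
    intro s hs
    have := (Complex.reCLM.hasFDerivAt.comp_hasDerivAt s (hderiv z hz s hs))
    simp only [Complex.reCLM_apply] at this
    exact this
  have hfc : ContinuousOn f (Ici 0) := fun s hs =>
    ((hfd s hs).continuousAt.continuousWithinAt)
  have hf0 : f 0 = z.re := by simp [hfdef, h0 z hz]
  have hmono : MonotoneOn f (Ici 0) := by
    apply monotoneOn_of_deriv_nonneg (convex_Ici 0) hfc
    · intro s hs
      rw [interior_Ici] at hs
      exact (hfd s hs.le).differentiableAt.differentiableWithinAt
    · intro s hs
      rw [interior_Ici] at hs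
      rw [(hfd s hs.le).deriv]
      exact hre _ (hmaps s hs.le z hz)
  have h1 : z.re ≤ f t := by
    have := hmono (self_mem_Ici) (mem_Ici.mpr ht) ht
    rwa [hf0] at this
  have hMt : M * t ≤ ε / 2 := by
    have := mul_le_mul_of_nonneg_left htM (le_of_lt hM)
    calc M * t ≤ M * (ε / (2 * M)) := this
      _ = ε / 2 := by field_simp
  -- key upper bound
  set c : ℝ := max z.re (ε / 2) with hcdef
  have key : f t ≤ c + M * t := by
    by_contra hcon
    push_neg at hcon
    set φ : ℝ → ℝ := fun s => f s - M * s with hφdef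
    have hφd : ∀ s : ℝ, 0 ≤ s → HasDerivAt φ ((H (Φ s z)).re - M) s := by
      intro s hs
      have h2 : HasDerivAt (fun x : ℝ => M * x) (M * 1) s :=
        (hasDerivAt_id s).const_mul M
      have := (hfd s hs).sub h2
      simp only [mul_one] at this
      exact this
    have hφc : ContinuousOn φ (Ici 0) :=
      hfc.sub ((continuous_const.mul continuous_id).continuousOn)
    set S : Set ℝ := Icc 0 t ∩ φ ⁻¹' (Iic c) with hSdef
    have hS0 : (0 : ℝ) ∈ S := by
      constructor
      · exact ⟨le_refl 0, ht⟩
      · simp only [mem_preimage, mem_Iic, hφdef]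
        rw [hf0]
        simp [hcdef, le_max_left]
    have hSclosed : IsClosed S :=
      ContinuousOn.preimage_isClosed_of_isClosed
        (hφc.mono Icc_subset_Ici_self) isClosed_Icc isClosed_Iic
    have hSbdd : BddAbove S := (bddAbove_Icc).mono inter_subset_left
    set s₀ : ℝ := sSup S with hs₀def
    have hs₀S : s₀ ∈ S := hSclosed.csSup_mem ⟨0, hS0⟩ hSbdd
    have hs₀0 : 0 ≤ s₀ := hs₀S.1.1
    have hs₀t : s₀ ≤ t := hs₀S.1.2
    have hφs₀ : φ s₀ ≤ c := hs₀S.2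
    have hmid : ∀ s ∈ Ioo s₀ t, ε / 2 < f s := by
      intro s hs
      have hsnot : s ∉ S := by
        intro hmem
        exact absurd (le_csSup hSbdd hmem) (not_le.mpr hs.1)
      have hs0 : 0 ≤ s := le_trans hs₀0 hs.1.le
      have : c < φ s := by
        by_contra hle
        push_neg at hle
        exact hsnot ⟨⟨hs0, hs.2.le⟩, hle⟩
      have hMs : 0 ≤ M * s := mul_nonneg hM.le hs0
      have : c < f s - M * s := this
      have hcε : ε / 2 ≤ c := le_max_right _ _
      nlinarith
    have hanti : AntitoneOn φ (Icc s₀ t) := by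
      apply antitoneOn_of_deriv_nonpos (convex_Icc s₀ t)
      · exact hφc.mono (fun x hx => le_trans hs₀0 hx.1)
      · intro s hs
        rw [interior_Icc] at hs
        have hs0 : 0 ≤ s := le_trans hs₀0 hs.1.le
        exact (hφd s hs0).differentiableAt.differentiableWithinAt
      · intro s hs
        rw [interior_Icc] at hs
        have hs0 : 0 ≤ s := le_trans hs₀0 hs.1.le
        rw [(hφd s hs0).deriv]
        have hfs : ε / 2 < (Φ s z).re := hmid s hs
        have hb : ‖H (Φ s z)‖ ≤ M := hbound _ hfs
        have : (H (Φ s z)).re ≤ ‖H (Φ s z)‖ := Complex.re_le_norm _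
        linarith
    have hφt : φ t ≤ φ s₀ :=
      hanti ⟨le_refl s₀, hs₀t⟩ ⟨hs₀t, le_refl t⟩ hs₀t
    have : f t - M * t ≤ c := le_trans hφt hφs₀
    linarith
  constructor
  · linarith
  · have hclt : c < z.re + ε / 2 := by
      apply max_lt <;> linarith
    linarith
end

section
/- Let H : ℂ₊ → ℂ be the infinitesimal generator of a continuous semigroup {Φ_t} on ℂ₊ with Re H ≥ 0, and suppose there exist K > 0 and ε₀ > 0 such that sup_{z ∈ ℂ_ε} |H(z)| ≤ K/ε for all 0 < ε < ε₀. Then for all t < ε₀² and all z ∈ ℂ₊, one has 0 ≤ Re(Φ_t(z)) − Re(z) ≤ (1+K)√t. -/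
theorem stmt_13 (H : ℂ → ℂ) (K ε₀ : ℝ) (hK : 0 < K) (hε₀ : 0 < ε₀)
    (hH : DifferentiableOn ℂ H {w : ℂ | 0 < w.re})
    (hre : ∀ z : ℂ, 0 < z.re → 0 ≤ (H z).re)
    (hbound : ∀ ε : ℝ, 0 < ε → ε < ε₀ → ∀ z : ℂ, ε < z.re →
      ‖H z‖ ≤ K / ε)
    (Φ : ℝ → ℂ → ℂ)
    (hmaps : ∀ t : ℝ, 0 ≤ t → ∀ z : ℂ, 0 < z.re → 0 < (Φ t z).re)
    (h0 : ∀ z : ℂ, 0 < z.re → Φ 0 z = z)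
    (hderiv : ∀ z : ℂ, 0 < z.re → ∀ t : ℝ, 0 ≤ t →
      HasDerivAt (fun s : ℝ => Φ s z) (H (Φ t z)) t) :
    ∀ t : ℝ, 0 < t → t < ε₀ ^ 2 → ∀ z : ℂ, 0 < z.re →
      0 ≤ (Φ t z).re - z.re ∧ (Φ t z).re - z.re ≤ (1 + K) * Real.sqrt t := by
  intro t ht htε z hz
  set ε := Real.sqrt t with hε
  have hεpos : 0 < ε := Real.sqrt_pos.2 ht
  have hεlt : ε < ε₀ := (Real.sqrt_lt' hε₀).2 htε
  set f : ℝ → ℝ := fun s => (Φ s z).re with hf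
  -- derivative of f
  have hfderiv : ∀ s : ℝ, 0 ≤ s → HasDerivAt f ((H (Φ s z)).re) s := by
    intro s hs
    exact (Complex.reCLM.hasFDerivAt.comp_hasDerivAt s (hderiv z hz s hs))
  have hfc : ContinuousOn f (Set.Icc 0 t) := fun s hs =>
    ((hfderiv s hs.1).continuousAt).continuousWithinAt
  have hfd : ∀ x ∈ Set.Ico (0:ℝ) t, HasDerivWithinAt f ((H (Φ x z)).re) (Set.Ici x) x :=
    fun x hx => (hfderiv x hx.1).hasDerivWithinAt
  have hf0 : f 0 = z.re := by rw [hf]; simp [h0 z hz]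
  -- lower bound: monotonicity
  have hlow : f 0 ≤ f t := by
    have := image_le_of_deriv_right_le_deriv_boundary
      (f := fun s => -f s) (f' := fun s => -((H (Φ s z)).re))
      (a := 0) (b := t) (B := fun _ => -f 0) (B' := fun _ => 0)
      (hfc.neg) (fun x hx => (hfd x hx).neg) le_rfl continuousOn_const
      (fun x _ => hasDerivWithinAt_const x _ _)
      (fun x hx => by
        simpa using hre (Φ x z) (hmaps x hx.1 z hz))
      (Set.right_mem_Icc.2 ht.le)
    linarith [show -f t ≤ -f 0 from this]
  constructor
  · simpa [hf0] using hlow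
  -- upper bound
  have key : ∀ σ : ℝ, 0 < σ → f t ≤ max ε (f 0) + σ + (K / ε + σ) * t := by
    intro σ hσ
    have := image_le_of_deriv_right_lt_deriv_boundary
      (f := f) (f' := fun s => (H (Φ s z)).re) (a := 0) (b := t)
      (B := fun x => max ε (f 0) + σ + (K / ε + σ) * x) (B' := fun _ => K / ε + σ)
      hfc hfd
      (by simp; nlinarith [le_max_right ε (f 0)])
      (fun x => by
        simpa using ((hasDerivAt_id x).const_mul (K / ε + σ)).const_add (max ε (f 0) + σ))
      (fun x hx hfx => by
        have hgt : ε < (Φ x z).re := by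
          have h1 : ε + σ ≤ f x := by
            rw [hfx]
            have := le_max_left ε (f 0)
            nlinarith [mul_nonneg (by positivity : (0:ℝ) ≤ K / ε + σ) hx.1]
          have : ε < f x := by linarith
          simpa [hf] using this
        have h2 : (H (Φ x z)).re ≤ K / ε :=
          (Complex.re_le_norm _).trans (hbound ε hεpos hεlt (Φ x z) hgt)
        linarith)
      (Set.right_mem_Icc.2 ht.le)
    linarith [this]
  have hmain : f t ≤ max ε (f 0) + (K / ε) * t := by
    refine le_of_forall_pos_le_add fun η hη => ?_
    have hσ : 0 < η / (1 + t) := by positivity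
    have := key (η / (1 + t)) hσ
    have heq : η / (1 + t) * (1 + t) = η := div_mul_cancel₀ η (by linarith)
    nlinarith
  have hεsq : ε * ε = t := Real.mul_self_sqrt ht.le
  have hmax : max ε (f 0) ≤ ε + f 0 := by
    have h1 : 0 < f 0 := by rw [hf0]; exact hz
    rcases max_cases ε (f 0) with ⟨h, _⟩ | ⟨h, _⟩ <;> rw [h] <;> linarith
  have hKt : (K / ε) * t = K * ε := by
    field_simp
    nlinarith
  have : f t - f 0 ≤ ε + K * ε := by
    rw [← hKt]; linarith
  rw [show (Φ t z).re - z.re = f t - f 0 by rw [hf0]]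
  calc f t - f 0 ≤ ε + K * ε := this
    _ = (1 + K) * ε := by ring
end
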